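/- Let K be a differential field with commuting derivations d/dx_1,...,d/dx_k and field of constants C = {c ∈ K : (d/dx_i)c = 0 for all i}. In the left division ring of fractions K(∂_1,...,∂_k) of the differential polynomial ring K[∂_1,...,∂_k], the simultaneous centralizer of all ∂_j equals C(∂_1,...,∂_k): {x ∈ K(∂_1,...,∂_k) : x∂_j = ∂_j x for all 1 ≤ j ≤ k} = C(∂_1,...,∂_k). -/
import Mathlib


/-- The element `∑ a_{i⃗} ∂^{i⃗}` of the differential polynomial ring determined by the
finitely supported coefficient function `f`. -/
noncomputable def dmon {K R : Type*} [Field K] [Ring R] {k : ℕ} (ι : K →+* R)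
    (δ : Fin k → R) (f : (Fin k →₀ ℕ) →₀ K) : R :=
  f.sum fun v a => ι a * (List.ofFn fun i => δ i ^ v i).prod

/-- Let `K` be a differential field with commuting derivations `d 1, …, d k`, let `R` be the
differential polynomial ring `K[∂_1,…,∂_k]` (axiomatized as in the paper), and let `D` be
the left division ring of fractions `K(∂_1,…,∂_k)` of `R` (axiomatized: `j : R →+* D`
injective and every element of `D` is a left fraction `(j b)⁻¹ (j a)`).  Then the
simultaneous centralizer of the `∂_i` in `D` is `C(∂_1,…,∂_k)`: the set of left fractions
of elements of `C[∂_1,…,∂_k]`, where `C = {c : K | ∀ i, d i c = 0}` is the field of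
constants. -/
theorem stmt12 {K R D : Type*} [Field K] [Ring R] [DivisionRing D] (k : ℕ)
    (d : Fin k → K → K)
    (hd_add : ∀ i a b, d i (a + b) = d i a + d i b)
    (hd_mul : ∀ i a b, d i (a * b) = a * d i b + b * d i a)
    (hd_comm : ∀ i j a, d i (d j a) = d j (d i a))
    (ι : K →+* R) (hι : Function.Injective ι)
    (δ : Fin k → R)
    (hδcomm : ∀ i j, δ i * δ j = δ j * δ i)
    (hδι : ∀ i a, δ i * ι a = ι a * δ i + ι (d i a))
    (hbasis : ∀ x : R, ∃! f : (Fin k →₀ ℕ) →₀ K, x = dmon ι δ f)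
    (j : R →+* D) (hj : Function.Injective j)
    (hfrac : ∀ x : D, ∃ a b : R, b ≠ 0 ∧ j b * x = j a) :
    {x : D | ∀ i, x * j (δ i) = j (δ i) * x}
      = {x : D | ∃ a b : R,
          (∃ f : (Fin k →₀ ℕ) →₀ K, (∀ v i, d i (f v) = 0) ∧ a = dmon ι δ f) ∧
          (∃ g : (Fin k →₀ ℕ) →₀ K, (∀ v i, d i (g v) = 0) ∧ b = dmon ι δ g) ∧
          b ≠ 0 ∧ x = (j b)⁻¹ * j a} := by
  -- basic facts about the derivations
  have hd0 : ∀ i, d i (0 : K) = 0 := by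
    intro i
    have h := hd_add i 0 0
    rw [add_zero] at h
    exact left_eq_add.mp h
  -- the commutator formula
  have hcommut : ∀ (i : Fin k) (f : (Fin k →₀ ℕ) →₀ K),
      δ i * dmon ι δ f = dmon ι δ f * δ i + dmon ι δ (f.mapRange (d i) (hd0 i)) := by
    intro i f
    have hM : ∀ v : Fin k →₀ ℕ, Commute (δ i) (List.ofFn fun l => δ l ^ v l).prod := by
      intro v
      apply Commute.list_prod_right
      intro x hx
      rw [List.mem_ofFn] at hx
      obtain ⟨l, rfl⟩ := hx
      exact (show Commute (δ i) (δ l) from hδcomm i l).pow_right _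
    unfold dmon
    rw [Finsupp.sum_mapRange_index (by intro v; simp)]
    simp only [Finsupp.sum]
    rw [Finset.mul_sum, Finset.sum_mul, ← Finset.sum_add_distrib]
    refine Finset.sum_congr rfl fun v _ => ?_
    rw [← mul_assoc, hδι i, add_mul, mul_assoc, mul_assoc, (hM v).eq, ← mul_assoc]
  -- scaling formula
  have hscale : ∀ (c : K) (f : (Fin k →₀ ℕ) →₀ K),
      ι c * dmon ι δ f = dmon ι δ (f.mapRange (c * ·) (mul_zero c)) := by
    intro c f
    unfold dmon
    rw [Finsupp.sum_mapRange_index (by intro v; simp)]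
    simp only [Finsupp.sum]
    rw [Finset.mul_sum]
    refine Finset.sum_congr rfl fun v _ => ?_
    rw [← mul_assoc, ← map_mul]
  have hdmon0 : dmon ι δ (0 : (Fin k →₀ ℕ) →₀ K) = 0 := Finsupp.sum_zero_index
  -- uniqueness of coefficients
  have huniq : ∀ f g : (Fin k →₀ ℕ) →₀ K, dmon ι δ f = dmon ι δ g → f = g := by
    intro f g h
    exact (hbasis (dmon ι δ g)).unique h.symm rfl
  have hzero : ∀ f : (Fin k →₀ ℕ) →₀ K, dmon ι δ f = 0 → f = 0 := fun f h =>
    huniq f 0 (h.trans hdmon0.symm)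
  -- constant coefficients imply commuting with δ i
  have hconst_comm : ∀ (f : (Fin k →₀ ℕ) →₀ K), (∀ v i, d i (f v) = 0) →
      ∀ i, δ i * dmon ι δ f = dmon ι δ f * δ i := by
    intro f hf i
    have : f.mapRange (d i) (hd0 i) = 0 := by
      ext v; simp [Finsupp.mapRange_apply, hf v i]
    rw [hcommut i f, this, hdmon0, add_zero]
  ext x
  simp only [Set.mem_setOf_eq]
  constructor
  · -- hard direction
    intro hx
    obtain ⟨a0, b0, hb0, hab0⟩ := hfrac x
    obtain ⟨f0, hf0, -⟩ := hbasis b0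
    have hf0ne : f0 ≠ 0 := fun h => hb0 (by rw [hf0, h, hdmon0])
    -- the set of support cardinalities of denominators
    set S : Set ℕ := {n | ∃ (f : (Fin k →₀ ℕ) →₀ K) (s : R), f ≠ 0 ∧
      j (dmon ι δ f) * x = j s ∧ f.support.card = n} with hSdef
    have hSne : S.Nonempty := ⟨f0.support.card, f0, a0, hf0ne, by rw [← hf0]; exact hab0, rfl⟩
    obtain ⟨f, s, hfne, hfs, hcard⟩ := Nat.sInf_mem hSne
    -- normalize one coefficient to 1
    obtain ⟨v₀, hv₀⟩ := Finsupp.support_nonempty_iff.mpr hfne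
    have hfv₀ : f v₀ ≠ 0 := Finsupp.mem_support_iff.mp hv₀
    set c : K := (f v₀)⁻¹ with hcdef
    have hc : c ≠ 0 := inv_ne_zero hfv₀
    set f' : (Fin k →₀ ℕ) →₀ K := f.mapRange (c * ·) (mul_zero c) with hf'def
    have hf'v₀ : f' v₀ = 1 := by
      simp only [hf'def, Finsupp.mapRange_apply]
      exact inv_mul_cancel₀ hfv₀
    have hf'ne : f' ≠ 0 := fun h => one_ne_zero (by rw [← hf'v₀, h]; rfl)
    set s' : R := ι c * s with hs'def
    have hfs' : j (dmon ι δ f') * x = j s' := by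
      rw [hf'def, ← hscale, map_mul, mul_assoc, hfs, ← map_mul]
    -- support card of f' equals sInf S
    have hsub : f'.support ⊆ f.support := Finsupp.support_mapRange
    have hcard' : f'.support.card = sInf S := by
      have h1 : f'.support.card ≤ sInf S := hcard ▸ Finset.card_le_card hsub
      have h2 : sInf S ≤ f'.support.card := Nat.sInf_le ⟨f', s', hf'ne, hfs', rfl⟩
      omega
    have hv₀' : v₀ ∈ f'.support := Finsupp.mem_support_iff.mpr (by rw [hf'v₀]; exact one_ne_zero)
    -- the commutator of δ i with dmon f' lies in the denominator set
    have hcomm_frac : ∀ i : Fin k,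
        j (dmon ι δ (f'.mapRange (d i) (hd0 i))) * x = j (δ i * s' - s' * δ i) := by
      intro i
      have hg : dmon ι δ (f'.mapRange (d i) (hd0 i))
          = δ i * dmon ι δ f' - dmon ι δ f' * δ i := by
        rw [hcommut i f']
        exact (add_sub_cancel_left _ _).symm
      have e1 : j (δ i * dmon ι δ f' - dmon ι δ f' * δ i) * x
          = j (δ i) * (j (dmon ι δ f') * x) - (j (dmon ι δ f') * x) * j (δ i) := by
        rw [map_sub, map_mul, map_mul, sub_mul]
        congr 1
        · rw [mul_assoc]
        · rw [mul_assoc, ← hx i, ← mul_assoc]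
      rw [hg, e1, hfs']
      simp only [hs'def, map_sub, map_mul, mul_assoc]
    -- each commutator must vanish by minimality
    have hgzero : ∀ i : Fin k, f'.mapRange (d i) (hd0 i) = 0 := by
      intro i
      by_contra hg
      have hle : sInf S ≤ (f'.mapRange (d i) (hd0 i)).support.card :=
        Nat.sInf_le ⟨_, _, hg, hcomm_frac i, rfl⟩
      have hsubset : (f'.mapRange (d i) (hd0 i)).support ⊆ f'.support.erase v₀ := by
        intro v hv
        rw [Finsupp.mem_support_iff, Finsupp.mapRange_apply] at hv
        refine Finset.mem_erase.mpr ⟨?_, Finsupp.mem_support_iff.mpr fun h => hv (by rw [h, hd0])⟩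
        rintro rfl
        apply hv
        rw [hf'v₀]
        have h1 := hd_mul i 1 1
        rw [mul_one, one_mul] at h1
        exact left_eq_add.mp h1
      have hlt : (f'.mapRange (d i) (hd0 i)).support.card < f'.support.card :=
        lt_of_le_of_lt (Finset.card_le_card hsubset)
          (Finset.card_erase_lt_of_mem hv₀')
      omega
    -- coefficients of f' are constants
    have hf'const : ∀ v i, d i (f' v) = 0 := by
      intro v i
      have := Finsupp.ext_iff.mp (hgzero i) v
      simpa [Finsupp.mapRange_apply] using this
    -- now show s' has constant coefficients
    have hδf' : ∀ i, δ i * dmon ι δ f' = dmon ι δ f' * δ i := hconst_comm f' hf'const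
    have hδs' : ∀ i, δ i * s' = s' * δ i := by
      intro i
      apply hj
      rw [map_mul, ← hfs', ← mul_assoc, ← map_mul, hδf' i, map_mul,
        mul_assoc, ← hx i, ← mul_assoc, hfs', ← map_mul]
    obtain ⟨h, hh, -⟩ := hbasis s'
    have hhconst : ∀ v i, d i (h v) = 0 := by
      have hmz : ∀ i, h.mapRange (d i) (hd0 i) = 0 := by
        intro i
        apply hzero
        have := hcommut i h
        rw [← hh, hδs' i] at this
        exact (add_eq_left.mp this.symm)
      intro v i
      have := Finsupp.ext_iff.mp (hmz i) v
      simpa [Finsupp.mapRange_apply] using this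
    -- conclude
    have hbne : dmon ι δ f' ≠ 0 := fun h0 => hf'ne (hzero f' h0)
    have hjbne : j (dmon ι δ f') ≠ 0 := fun h0 => hbne (hj (by rw [h0, map_zero]))
    refine ⟨s', dmon ι δ f', ⟨h, hhconst, hh⟩, ⟨f', hf'const, rfl⟩, hbne, ?_⟩
    rw [← hfs', ← mul_assoc, inv_mul_cancel₀ hjbne, one_mul]
  · -- easy direction
    rintro ⟨a, b, ⟨f, hfc, rfl⟩, ⟨g, hgc, rfl⟩, hbne, rfl⟩ i
    have hca : Commute (j (δ i)) (j (dmon ι δ f)) := by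
      rw [Commute, SemiconjBy, ← map_mul, ← map_mul, hconst_comm f hfc i]
    have hcb : Commute (j (δ i)) (j (dmon ι δ g)) := by
      rw [Commute, SemiconjBy, ← map_mul, ← map_mul, hconst_comm g hgc i]
    have hjb : j (dmon ι δ g) ≠ 0 := fun h0 => hbne (hj (by rw [h0, map_zero]))
    have hcbinv : Commute (j (δ i)) (j (dmon ι δ g))⁻¹ := hcb.inv_right₀
    rw [mul_assoc, ← hca.eq, ← mul_assoc, ← hcbinv.eq, mul_assoc]
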